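/- Let −3 < α < 0 and define J_α(v) = ∫_{ℝ³} |v−v_*|^α μ(v_*) dv_* where μ(v) = (2π)^{−3/2} e^{−|v|²/2}. Then there exists a constant C > 0 such that J_α(v) ≤ C ⟨v⟩^α for all v ∈ ℝ³. -/

import Mathlib

open MeasureTheory

/-- The standard Gaussian density `μ(v) = (2π)^{-3/2} e^{-|v|²/2}` on ℝ³. -/
noncomputable def gaussian (v : EuclideanSpace ℝ (Fin 3)) : ℝ :=
  (2 * Real.pi) ^ (-(3 : ℝ) / 2) * Real.exp (-‖v‖ ^ 2 / 2)

/-- The Japanese bracket `⟨v⟩ = (1+|v|²)^{1/2}`. -/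
noncomputable def jap {d : ℕ} (v : EuclideanSpace ℝ (Fin d)) : ℝ :=
  Real.sqrt (1 + ‖v‖ ^ 2)

open Metric Set
open scoped ENNReal

noncomputable abbrev E3 := EuclideanSpace ℝ (Fin 3)

lemma one_le_jap (v : E3) : 1 ≤ jap v := by
  unfold jap
  have h := Real.sqrt_le_sqrt (show (1:ℝ) ≤ 1 + ‖v‖ ^ 2 by nlinarith [sq_nonneg ‖v‖])
  simpa using h

lemma jap_sq (v : E3) : jap v ^ 2 = 1 + ‖v‖ ^ 2 := Real.sq_sqrt (by positivity)

lemma jap_le (v : E3) : jap v ≤ 1 + ‖v‖ := sqrt_one_add_norm_sq_le v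

lemma gaussian_nonneg (w : E3) : 0 ≤ gaussian w := by unfold gaussian; positivity

lemma small_finite {α : ℝ} (hα0 : -3 < α) (hα2 : α < 0) :
    (∫⁻ u in ball (0 : E3) 1, ENNReal.ofReal (‖u‖ ^ α)) < ∞ := by
  have hmeas : Measurable fun a : E3 => ‖a‖ ^ α := by fun_prop
  have hαne : α ≠ 0 := hα2.ne
  rw [lintegral_eq_lintegral_meas_le _
      (Filter.Eventually.of_forall fun a => Real.rpow_nonneg (norm_nonneg a) α)
      hmeas.aemeasurable]
  have hsub : ∀ t : ℝ, 1 < t →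
      {a : E3 | t ≤ ‖a‖ ^ α} ⊆ closedBall 0 (t ^ α⁻¹) := by
    intro t ht a ha
    have ht0 : (0:ℝ) < t := by linarith
    simp only [mem_setOf_eq] at ha
    have hna : a ≠ 0 := by
      rintro rfl
      rw [norm_zero, Real.zero_rpow hαne] at ha; linarith
    have key := Real.rpow_le_rpow_of_nonpos ht0 ha (by
      simpa using (inv_nonpos.mpr hα2.le) : α⁻¹ ≤ 0)
    rw [Real.rpow_rpow_inv (norm_nonneg a) hαne] at key
    exact mem_closedBall_zero_iff.mpr key
  calc ∫⁻ t in Ioi (0:ℝ), (volume.restrict (ball (0:E3) 1)) {a | t ≤ ‖a‖ ^ α}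
      ≤ ∫⁻ t in Ioc (0:ℝ) 1 ∪ Ioi 1, (volume.restrict (ball (0:E3) 1)) {a | t ≤ ‖a‖ ^ α} :=
        lintegral_mono_set Ioi_subset_Ioc_union_Ioi
    _ ≤ (∫⁻ t in Ioc (0:ℝ) 1, (volume.restrict (ball (0:E3) 1)) {a | t ≤ ‖a‖ ^ α})
        + ∫⁻ t in Ioi (1:ℝ), (volume.restrict (ball (0:E3) 1)) {a | t ≤ ‖a‖ ^ α} :=
        lintegral_union_le _ _ _
    _ < ∞ := by
        apply ENNReal.add_lt_top.2
        constructor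
        · calc (∫⁻ t in Ioc (0:ℝ) 1, (volume.restrict (ball (0:E3) 1)) {a | t ≤ ‖a‖ ^ α})
              ≤ ∫⁻ _t in Ioc (0:ℝ) 1, volume (ball (0:E3) 1) := by
                refine setLIntegral_mono' measurableSet_Ioc fun t _ => ?_
                calc (volume.restrict (ball (0:E3) 1)) {a | t ≤ ‖a‖ ^ α}
                    ≤ (volume.restrict (ball (0:E3) 1)) univ := measure_mono (subset_univ _)
                  _ = volume (ball (0:E3) 1) := by
                      rw [Measure.restrict_apply_univ]
            _ = volume (ball (0:E3) 1) * volume (Ioc (0:ℝ) 1) := setLIntegral_const _ _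
            _ < ∞ := ENNReal.mul_lt_top measure_ball_lt_top (by simp)
        · calc (∫⁻ t in Ioi (1:ℝ), (volume.restrict (ball (0:E3) 1)) {a | t ≤ ‖a‖ ^ α})
              ≤ ∫⁻ t in Ioi (1:ℝ), ENNReal.ofReal (t ^ (α⁻¹ * 3)) * volume (ball (0:E3) 1) := by
                refine setLIntegral_mono' measurableSet_Ioi fun t ht => ?_
                have ht0 : (0:ℝ) < t := by have := ht.out; linarith
                calc (volume.restrict (ball (0:E3) 1)) {a | t ≤ ‖a‖ ^ α}
                    ≤ volume (closedBall (0:E3) (t ^ α⁻¹)) := by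
                      refine le_trans (le_trans (measure_mono (hsub t ht.out)) ?_) le_rfl
                      exact Measure.restrict_le_self _
                  _ = ENNReal.ofReal ((t ^ α⁻¹) ^ Module.finrank ℝ E3) * volume (ball (0:E3) 1) :=
                      Measure.addHaar_closedBall _ _ (Real.rpow_nonneg ht0.le _)
                  _ = ENNReal.ofReal (t ^ (α⁻¹ * 3)) * volume (ball (0:E3) 1) := by
                      rw [finrank_euclideanSpace_fin, ← Real.rpow_natCast (t ^ α⁻¹) 3,
                        ← Real.rpow_mul ht0.le]
                      norm_num
            _ = (∫⁻ t in Ioi (1:ℝ), ENNReal.ofReal (t ^ (α⁻¹ * 3))) * volume (ball (0:E3) 1) :=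
                lintegral_mul_const' _ _ measure_ball_lt_top.ne
            _ < ∞ := by
                refine ENNReal.mul_lt_top ?_ measure_ball_lt_top
                refine IntegrableOn.setLIntegral_lt_top ?_
                refine integrableOn_Ioi_rpow_of_lt ?_ one_pos
                rw [inv_mul_eq_div, div_lt_iff_of_neg hα2]
                linarith

lemma translate' (v : E3) (R : ℝ) (α : ℝ) :
    ∫⁻ w in ball v R, ENNReal.ofReal (‖v - w‖ ^ α)
      = ∫⁻ u in ball (0 : E3) R, ENNReal.ofReal (‖u‖ ^ α) := by
  have hset : ((fun t : E3 => v - t) ⁻¹' ball 0 R) = ball v R := by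
    ext w
    simp only [mem_preimage, mem_ball_zero_iff, mem_ball, dist_eq_norm]
    rw [sub_zero, norm_sub_rev v w]
  have h := (Measure.measurePreserving_sub_left (volume : Measure E3) v).setLIntegral_comp_preimage_emb
    (MeasurableEquiv.subLeft v).measurableEmbedding
    (fun u : E3 => ENNReal.ofReal (‖u‖ ^ α)) (ball 0 R)
  rw [hset] at h
  exact h

lemma gauss_finite : (∫⁻ w : E3, ENNReal.ofReal (gaussian w)) < ∞ := by
  have hbound : ∀ w : E3, gaussian w ≤
      (2 * Real.pi) ^ (-(3:ℝ)/2) * Real.exp 8 * (1 + ‖w‖) ^ (-(4:ℝ)) := by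
    intro w
    unfold gaussian
    rw [mul_assoc]
    refine mul_le_mul_of_nonneg_left ?_ (by positivity)
    set x := ‖w‖ with hx
    have hx0 : 0 ≤ x := norm_nonneg w
    have h1 : (1 + x) ^ (4:ℕ) ≤ Real.exp 8 * Real.exp (x ^ 2 / 2) := by
      have he : 1 + x ≤ Real.exp x := by
        have := Real.add_one_le_exp x; linarith
      calc (1 + x) ^ (4:ℕ) ≤ (Real.exp x) ^ (4:ℕ) :=
            pow_le_pow_left₀ (by linarith) he 4
        _ = Real.exp ((4:ℕ) * x) := (Real.exp_nat_mul x 4).symm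
        _ ≤ Real.exp (8 + x ^ 2 / 2) := by
            apply Real.exp_le_exp.mpr; push_cast; nlinarith [sq_nonneg (x - 4)]
        _ = Real.exp 8 * Real.exp (x ^ 2 / 2) := Real.exp_add _ _
    have h2 : (1 + x) ^ (-(4:ℝ)) = ((1 + x) ^ (4:ℕ))⁻¹ := by
      rw [← Real.rpow_natCast (1 + x) 4, ← Real.rpow_neg (by linarith)]
      norm_num
    rw [h2, neg_div, Real.exp_neg, ← one_div, ← div_eq_mul_inv,
      div_le_div_iff₀ (Real.exp_pos _) (by positivity)]
    linarith [h1]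
  have hfin := finite_integral_one_add_norm (μ := (volume : Measure E3)) (r := 4)
      (by rw [finrank_euclideanSpace_fin]; norm_num)
  calc (∫⁻ w : E3, ENNReal.ofReal (gaussian w))
      ≤ ∫⁻ w : E3, ENNReal.ofReal ((2 * Real.pi) ^ (-(3:ℝ)/2) * Real.exp 8) *
          ENNReal.ofReal ((1 + ‖w‖) ^ (-(4:ℝ))) := by
        refine lintegral_mono fun w => ?_
        rw [← ENNReal.ofReal_mul (by positivity)]
        exact ENNReal.ofReal_le_ofReal (hbound w)
    _ = ENNReal.ofReal ((2 * Real.pi) ^ (-(3:ℝ)/2) * Real.exp 8) *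
        ∫⁻ w : E3, ENNReal.ofReal ((1 + ‖w‖) ^ (-(4:ℝ))) :=
        lintegral_const_mul' _ _ ENNReal.ofReal_ne_top
    _ < ∞ := ENNReal.mul_lt_top ENNReal.ofReal_lt_top hfin

lemma gauss_near {v w : E3} (hw : w ∈ ball v (jap v / 2)) :
    gaussian w ≤ (2 * Real.pi) ^ (-(3:ℝ)/2) * (Real.exp 1 * Real.exp (-‖v‖ ^ 2 / 16)) := by
  unfold gaussian
  refine mul_le_mul_of_nonneg_left ?_ (by positivity)
  rw [← Real.exp_add]
  apply Real.exp_le_exp.mpr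
  have hx0 : 0 ≤ ‖v‖ := norm_nonneg v
  have hy0 : 0 ≤ ‖w‖ := norm_nonneg w
  have hdist : ‖v - w‖ < jap v / 2 := by
    rw [mem_ball, dist_eq_norm, norm_sub_rev] at hw
    exact hw
  have hj : jap v ≤ 1 + ‖v‖ := jap_le v
  have hy2 : ‖v‖ - (1 + ‖v‖) / 2 ≤ ‖w‖ := by
    have h := norm_sub_norm_le v w
    linarith
  set x := ‖v‖
  set y := ‖w‖
  rcases le_or_gt x 4 with hx4 | hx4
  · nlinarith
  · have hyge : (x - 1) / 2 ≤ y := by linarith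
    have hynn : 0 ≤ (x - 1) / 2 := by linarith
    nlinarith [mul_le_mul hyge hyge hynn hy0, sq_nonneg (x - 2)]

lemma cube_bound (t : ℝ) (ht : 0 ≤ t) :
    (1 + t) ^ (3:ℕ) ≤ 48 ^ (3:ℕ) * Real.exp (t / 16) := by
  have h : 1 + t ≤ 48 * Real.exp (t / 48) := by
    have := Real.add_one_le_exp (t / 48)
    nlinarith
  calc (1 + t) ^ (3:ℕ) ≤ (48 * Real.exp (t / 48)) ^ (3:ℕ) :=
        pow_le_pow_left₀ (by linarith) h 3
    _ = 48 ^ (3:ℕ) * Real.exp ((3:ℕ) * (t / 48)) := by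
        rw [mul_pow, Real.exp_nat_mul]
    _ = 48 ^ (3:ℕ) * Real.exp (t / 16) := by
        congr 1
        push_cast
        ring

lemma near_const {α k b c0 : ℝ} (hα0 : -3 < α) (hα2 : α < 0) (hk : 0 ≤ k) (hb : 0 ≤ b)
    (hc0 : 0 ≤ c0) (v : E3) :
    (k + jap v ^ (3:ℕ) * b) * (c0 * (Real.exp 1 * Real.exp (-‖v‖ ^ 2 / 16)))
      ≤ ((k + b) * c0 * Real.exp 1 * 48 ^ 3) * jap v ^ α := by
  have h1 : 1 ≤ jap v := one_le_jap v
  have hj0 : (0:ℝ) < jap v := by linarith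
  have hsq : jap v ^ (2:ℕ) = 1 + ‖v‖ ^ 2 := jap_sq v
  set j := jap v
  set x := ‖v‖
  have hJ1 : (1:ℝ) ≤ j ^ (3:ℕ) := by nlinarith
  have hA : k + j ^ (3:ℕ) * b ≤ (k + b) * j ^ (3:ℕ) := by nlinarith
  have hcube := cube_bound (x ^ 2) (sq_nonneg x)
  have h6 : j ^ (3:ℕ) * j ^ (3:ℕ) = (1 + x ^ 2) ^ (3:ℕ) := by
    rw [← hsq]; ring
  have hB : j ^ (3:ℕ) * Real.exp (-x ^ 2 / 16) * j ^ (3:ℕ) ≤ 48 ^ (3:ℕ) := by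
    calc j ^ (3:ℕ) * Real.exp (-x ^ 2 / 16) * j ^ (3:ℕ)
        = (1 + x ^ 2) ^ (3:ℕ) * Real.exp (-x ^ 2 / 16) := by rw [← h6]; ring
      _ ≤ (48 ^ (3:ℕ) * Real.exp (x ^ 2 / 16)) * Real.exp (-x ^ 2 / 16) :=
          mul_le_mul_of_nonneg_right hcube (Real.exp_pos _).le
      _ = 48 ^ (3:ℕ) * Real.exp (x ^ 2 / 16 + -x ^ 2 / 16) := by
          rw [mul_assoc, Real.exp_add]
      _ = 48 ^ (3:ℕ) := by
          rw [show x ^ 2 / 16 + -x ^ 2 / 16 = 0 by ring, Real.exp_zero, mul_one]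
  have hstep : j ^ (3:ℕ) * Real.exp (-x ^ 2 / 16) ≤ 48 ^ 3 * (j ^ (3:ℕ))⁻¹ := by
    rw [← div_eq_mul_inv, le_div_iff₀ (by positivity)]
    exact hB
  have hj3inv : j ^ (-3:ℝ) = (j ^ (3:ℕ))⁻¹ := by
    rw [← Real.rpow_natCast j 3, ← Real.rpow_neg hj0.le]
    norm_num
  have hja : j ^ (-3:ℝ) ≤ j ^ α := Real.rpow_le_rpow_of_exponent_le h1 (by linarith)
  have hkb : 0 ≤ (k + b) * c0 * Real.exp 1 := by positivity
  calc (k + j ^ (3:ℕ) * b) * (c0 * (Real.exp 1 * Real.exp (-x ^ 2 / 16)))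
      ≤ ((k + b) * j ^ (3:ℕ)) * (c0 * (Real.exp 1 * Real.exp (-x ^ 2 / 16))) :=
        mul_le_mul_of_nonneg_right hA (by positivity)
    _ = ((k + b) * c0 * Real.exp 1) * (j ^ (3:ℕ) * Real.exp (-x ^ 2 / 16)) := by ring
    _ ≤ ((k + b) * c0 * Real.exp 1) * (48 ^ 3 * (j ^ (3:ℕ))⁻¹) :=
        mul_le_mul_of_nonneg_left hstep hkb
    _ = ((k + b) * c0 * Real.exp 1 * 48 ^ 3) * j ^ (-3:ℝ) := by rw [hj3inv]; ring
    _ ≤ ((k + b) * c0 * Real.exp 1 * 48 ^ 3) * j ^ α := by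
        refine mul_le_mul_of_nonneg_left hja (by positivity)

/-- For `-3 < α < 0`, `J_α(v) = ∫ |v-w|^α μ(w) dw ≤ C ⟨v⟩^α`. -/
theorem Jalpha_negative_upper_bound (α : ℝ) (hα0 : -3 < α) (hα2 : α < 0) :
    ∃ C : ℝ, 0 < C ∧ ∀ v : EuclideanSpace ℝ (Fin 3),
      (∫ w : EuclideanSpace ℝ (Fin 3), ‖v - w‖ ^ α * gaussian w) ≤ C * jap v ^ α := by
  set c0 : ℝ := (2 * Real.pi) ^ (-(3:ℝ)/2) with hc0def
  have hc0 : 0 < c0 := by rw [hc0def]; positivity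
  set k : ℝ := (∫⁻ u in ball (0:E3) 1, ENNReal.ofReal (‖u‖ ^ α)).toReal with hkdef
  have hk : 0 ≤ k := ENNReal.toReal_nonneg
  have hK : (∫⁻ u in ball (0:E3) 1, ENNReal.ofReal (‖u‖ ^ α)) = ENNReal.ofReal k :=
    (ENNReal.ofReal_toReal (small_finite hα0 hα2).ne).symm
  set b : ℝ := (volume (ball (0:E3) 1)).toReal with hbdef
  have hb : 0 ≤ b := ENNReal.toReal_nonneg
  have hB : volume (ball (0:E3) 1) = ENNReal.ofReal b :=
    (ENNReal.ofReal_toReal measure_ball_lt_top.ne).symm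
  set i : ℝ := (∫⁻ w : E3, ENNReal.ofReal (gaussian w)).toReal with hidef
  have hi : 0 ≤ i := ENNReal.toReal_nonneg
  have hI : (∫⁻ w : E3, ENNReal.ofReal (gaussian w)) = ENNReal.ofReal i :=
    (ENNReal.ofReal_toReal gauss_finite.ne).symm
  set C1 : ℝ := (k + b) * c0 * Real.exp 1 * 48 ^ 3 with hC1
  have hC1nn : 0 ≤ C1 := by
    rw [hC1]
    exact mul_nonneg (mul_nonneg (mul_nonneg (by linarith) hc0.le) (Real.exp_pos 1).le)
      (by norm_num)
  set C2 : ℝ := (2:ℝ) ^ (-α) * i with hC2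
  have hC2nn : 0 ≤ C2 := mul_nonneg (Real.rpow_nonneg (by norm_num) _) hi
  refine ⟨C1 + C2 + 1, by linarith, fun v => ?_⟩
  have h1j : 1 ≤ jap v := one_le_jap v
  have hjpos : 0 < jap v := by linarith
  have hjα : (0:ℝ) < jap v ^ α := Real.rpow_pos_of_pos hjpos α
  have hgc : Continuous gaussian := by unfold gaussian; fun_prop
  have hmeas : Measurable fun w : E3 => ‖v - w‖ ^ α * gaussian w :=
    Measurable.mul (by fun_prop) hgc.measurable
  have hnn : ∀ w : E3, 0 ≤ ‖v - w‖ ^ α * gaussian w := fun w =>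
    mul_nonneg (Real.rpow_nonneg (norm_nonneg _) α) (gaussian_nonneg w)
  rw [integral_eq_lintegral_of_nonneg_ae (Filter.Eventually.of_forall hnn)
    hmeas.aestronglyMeasurable]
  refine ENNReal.toReal_le_of_le_ofReal (mul_nonneg (by linarith) hjα.le) ?_
  set R : ℝ := jap v / 2 with hR
  have hRpos : 0 < R := by rw [hR]; linarith
  have hnear : (∫⁻ w in ball v R, ENNReal.ofReal (‖v - w‖ ^ α * gaussian w))
      ≤ ENNReal.ofReal (C1 * jap v ^ α) := by
    have hptw : ∀ w ∈ ball v R, ENNReal.ofReal (‖v - w‖ ^ α * gaussian w) ≤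
        ENNReal.ofReal (‖v - w‖ ^ α) *
          ENNReal.ofReal (c0 * (Real.exp 1 * Real.exp (-‖v‖ ^ 2 / 16))) := by
      intro w hw
      rw [← ENNReal.ofReal_mul (Real.rpow_nonneg (norm_nonneg _) α)]
      refine ENNReal.ofReal_le_ofReal
        (mul_le_mul_of_nonneg_left ?_ (Real.rpow_nonneg (norm_nonneg _) α))
      rw [hc0def]
      exact gauss_near (by rw [hR] at hw; exact hw)
    have hball : (∫⁻ u in ball (0:E3) R, ENNReal.ofReal (‖u‖ ^ α))
        ≤ ENNReal.ofReal k + ENNReal.ofReal (jap v ^ (3:ℕ) * b) := by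
      calc (∫⁻ u in ball (0:E3) R, ENNReal.ofReal (‖u‖ ^ α))
          ≤ ∫⁻ u in ball (0:E3) 1 ∪ (ball (0:E3) (jap v) \ ball (0:E3) 1),
              ENNReal.ofReal (‖u‖ ^ α) := by
            refine lintegral_mono_set ?_
            intro u hu
            rcases lt_or_ge ‖u‖ 1 with h | h
            · exact Or.inl (mem_ball_zero_iff.mpr h)
            · refine Or.inr ⟨mem_ball_zero_iff.mpr ?_,
                fun hu1 => absurd (mem_ball_zero_iff.mp hu1) (not_lt.mpr h)⟩
              have hu' := mem_ball_zero_iff.mp hu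
              rw [hR] at hu'
              linarith
        _ ≤ (∫⁻ u in ball (0:E3) 1, ENNReal.ofReal (‖u‖ ^ α))
            + ∫⁻ u in ball (0:E3) (jap v) \ ball (0:E3) 1, ENNReal.ofReal (‖u‖ ^ α) :=
          lintegral_union_le _ _ _
        _ ≤ ENNReal.ofReal k + ENNReal.ofReal (jap v ^ (3:ℕ) * b) := by
          refine add_le_add (le_of_eq hK) ?_
          calc (∫⁻ u in ball (0:E3) (jap v) \ ball (0:E3) 1, ENNReal.ofReal (‖u‖ ^ α))
              ≤ ∫⁻ _u in ball (0:E3) (jap v) \ ball (0:E3) 1, 1 := by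
                refine setLIntegral_mono' (measurableSet_ball.diff measurableSet_ball)
                  fun u hu => ?_
                have h1u : 1 ≤ ‖u‖ := not_lt.mp (fun hc => hu.2 (mem_ball_zero_iff.mpr hc))
                calc ENNReal.ofReal (‖u‖ ^ α) ≤ ENNReal.ofReal 1 :=
                    ENNReal.ofReal_le_ofReal
                      (Real.rpow_le_one_of_one_le_of_nonpos h1u hα2.le)
                  _ = 1 := ENNReal.ofReal_one
            _ = volume (ball (0:E3) (jap v) \ ball (0:E3) 1) := setLIntegral_one _
            _ ≤ volume (ball (0:E3) (jap v)) := measure_mono diff_subset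
            _ = ENNReal.ofReal (jap v ^ Module.finrank ℝ E3) * volume (ball (0:E3) 1) :=
                Measure.addHaar_ball volume (0:E3) (by linarith)
            _ = ENNReal.ofReal (jap v ^ (3:ℕ) * b) := by
                rw [finrank_euclideanSpace_fin, hB,
                  ← ENNReal.ofReal_mul (by positivity)]
    calc (∫⁻ w in ball v R, ENNReal.ofReal (‖v - w‖ ^ α * gaussian w))
        ≤ ∫⁻ w in ball v R, ENNReal.ofReal (‖v - w‖ ^ α) *
            ENNReal.ofReal (c0 * (Real.exp 1 * Real.exp (-‖v‖ ^ 2 / 16))) :=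
          setLIntegral_mono' measurableSet_ball hptw
      _ = (∫⁻ w in ball v R, ENNReal.ofReal (‖v - w‖ ^ α)) *
            ENNReal.ofReal (c0 * (Real.exp 1 * Real.exp (-‖v‖ ^ 2 / 16))) :=
          lintegral_mul_const' _ _ ENNReal.ofReal_ne_top
      _ = (∫⁻ u in ball (0:E3) R, ENNReal.ofReal (‖u‖ ^ α)) *
            ENNReal.ofReal (c0 * (Real.exp 1 * Real.exp (-‖v‖ ^ 2 / 16))) := by
          rw [translate']
      _ ≤ (ENNReal.ofReal k + ENNReal.ofReal (jap v ^ (3:ℕ) * b)) *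
            ENNReal.ofReal (c0 * (Real.exp 1 * Real.exp (-‖v‖ ^ 2 / 16))) := by
          gcongr
      _ = ENNReal.ofReal (k + jap v ^ (3:ℕ) * b) *
            ENNReal.ofReal (c0 * (Real.exp 1 * Real.exp (-‖v‖ ^ 2 / 16))) := by
          rw [← ENNReal.ofReal_add hk (mul_nonneg (by positivity) hb)]
      _ = ENNReal.ofReal ((k + jap v ^ (3:ℕ) * b) *
            (c0 * (Real.exp 1 * Real.exp (-‖v‖ ^ 2 / 16)))) := by
          rw [← ENNReal.ofReal_mul (add_nonneg hk (mul_nonneg (by positivity) hb))]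
      _ ≤ ENNReal.ofReal (C1 * jap v ^ α) :=
          ENNReal.ofReal_le_ofReal (near_const hα0 hα2 hk hb hc0.le v)
  have hfar : (∫⁻ w in (ball v R)ᶜ, ENNReal.ofReal (‖v - w‖ ^ α * gaussian w))
      ≤ ENNReal.ofReal (C2 * jap v ^ α) := by
    have hptw : ∀ w ∈ (ball v R)ᶜ, ENNReal.ofReal (‖v - w‖ ^ α * gaussian w) ≤
        ENNReal.ofReal (R ^ α) * ENNReal.ofReal (gaussian w) := by
      intro w hw
      have hge : R ≤ ‖v - w‖ := by
        rw [mem_compl_iff, mem_ball, dist_eq_norm, not_lt] at hw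
        rwa [norm_sub_rev w v] at hw
      rw [← ENNReal.ofReal_mul (Real.rpow_nonneg hRpos.le α)]
      refine ENNReal.ofReal_le_ofReal (mul_le_mul_of_nonneg_right ?_ (gaussian_nonneg w))
      exact Real.rpow_le_rpow_of_nonpos hRpos hge hα2.le
    calc (∫⁻ w in (ball v R)ᶜ, ENNReal.ofReal (‖v - w‖ ^ α * gaussian w))
        ≤ ∫⁻ w in (ball v R)ᶜ, ENNReal.ofReal (R ^ α) * ENNReal.ofReal (gaussian w) :=
          setLIntegral_mono' measurableSet_ball.compl hptw
      _ = ENNReal.ofReal (R ^ α) * ∫⁻ w in (ball v R)ᶜ, ENNReal.ofReal (gaussian w) :=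
          lintegral_const_mul' _ _ ENNReal.ofReal_ne_top
      _ ≤ ENNReal.ofReal (R ^ α) * ∫⁻ w : E3, ENNReal.ofReal (gaussian w) := by
          gcongr
          exact Measure.restrict_le_self
      _ = ENNReal.ofReal (R ^ α * i) := by
          rw [hI, ← ENNReal.ofReal_mul (Real.rpow_nonneg hRpos.le α)]
      _ ≤ ENNReal.ofReal (C2 * jap v ^ α) := by
          refine ENNReal.ofReal_le_ofReal (le_of_eq ?_)
          rw [hC2, hR, Real.div_rpow hjpos.le (by norm_num : (0:ℝ) ≤ 2),
            Real.rpow_neg (by norm_num : (0:ℝ) ≤ 2), div_eq_mul_inv]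
          ring
  rw [← lintegral_add_compl (fun w : E3 => ENNReal.ofReal (‖v - w‖ ^ α * gaussian w))
    (measurableSet_ball (x := v) (ε := R))]
  calc (∫⁻ w in ball v R, ENNReal.ofReal (‖v - w‖ ^ α * gaussian w))
        + (∫⁻ w in (ball v R)ᶜ, ENNReal.ofReal (‖v - w‖ ^ α * gaussian w))
      ≤ ENNReal.ofReal (C1 * jap v ^ α) + ENNReal.ofReal (C2 * jap v ^ α) :=
        add_le_add hnear hfar
    _ = ENNReal.ofReal (C1 * jap v ^ α + C2 * jap v ^ α) :=
        (ENNReal.ofReal_add (mul_nonneg hC1nn hjα.le) (mul_nonneg hC2nn hjα.le)).symm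
    _ ≤ ENNReal.ofReal ((C1 + C2 + 1) * jap v ^ α) :=
        ENNReal.ofReal_le_ofReal (by nlinarith)
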